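/- Let F ∈ R^h_d and Λ ∈ R* an extension of f* with I_Λ zero-dimensional and generalized decomposition Λ = Σᵢ₌₁^s 𝟙_{ζᵢ} ∘ pᵢ(∂). If kᵢ ≥ deg pᵢ + 1 for each i, then the intersection of powers of maximal ideals m_{ζ₁}^{k₁} ∩ ... ∩ m_{ζ_s}^{k_s} is contained in I_Λ, and I_Λ is contained in the dehomogenized annihilator of F; consequently F admits a decomposition F = Σᵢ₌₁^s Lᵢ^{d−kᵢ+1}·Nᵢ where Lᵢ = x₀ + (ζᵢ)₁x₁ + ... + (ζᵢ)ₙxₙ and Nᵢ is homogeneous of degree kᵢ−1. -/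

import Mathlib

open MvPolynomial

noncomputable section

variable {k : Type*}

def hankelKer [Field k] {n : ℕ} (Λ : Module.Dual k (MvPolynomial (Fin n) k)) :
    Ideal (MvPolynomial (Fin n) k) where
  carrier := {f | ∀ g, Λ (f * g) = 0}
  zero_mem' := by intro g; simp
  add_mem' := by
    intro a b ha hb g
    rw [add_mul, map_add, ha g, hb g, add_zero]
  smul_mem' := by
    intro c f hf g
    simp only [smul_eq_mul, Set.mem_setOf_eq] at *
    rw [mul_comm c f, mul_assoc]
    exact hf _

def evalDual [CommSemiring k] {n : ℕ} (ζ : Fin n → k) :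
    Module.Dual k (MvPolynomial (Fin n) k) := (aeval ζ).toLinearMap

def mBin [Field k] {n : ℕ} (d : ℕ) (α : Fin n →₀ ℕ) : k :=
  (d.factorial : k) /
    (((α.prod fun _ m => m.factorial : ℕ) : k) * ((d - α.sum fun _ m => m).factorial : ℕ))

/-- The apolar product on polynomials of degree at most `d`. -/
def apolar [Field k] {n : ℕ} (d : ℕ) (f g : MvPolynomial (Fin n) k) : k :=
  ∑ α ∈ f.support, f.coeff α * g.coeff α / mBin d α

/-- The differential operator `∂^α`. -/
def pderivPow [CommRing k] {n : ℕ} (α : Fin n →₀ ℕ) :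
    Module.End k (MvPolynomial (Fin n) k) :=
  (List.ofFn fun i : Fin n => ((pderiv i).toLinearMap) ^ (α i)).prod

/-- The differential operator `p(∂)` associated to a polynomial `p`. -/
def diffOp [CommRing k] {n : ℕ} (p : MvPolynomial (Fin n) k) :
    Module.End k (MvPolynomial (Fin n) k) :=
  ∑ α ∈ p.support, p.coeff α • pderivPow α

/-- Dehomogenization with respect to the variable `x₀`. -/
def dehom [CommSemiring k] {n : ℕ} (F : MvPolynomial (Fin (n+1)) k) :
    MvPolynomial (Fin n) k :=
  aeval (fun i => Fin.cases 1 X i) F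


section good
variable [Field k] {n : ℕ} (I : Ideal (MvPolynomial (Fin n) k))

def GoodOp (f : Module.End k (MvPolynomial (Fin n) k)) (m : ℕ) : Prop :=
  ∀ (j : ℕ) (x : MvPolynomial (Fin n) k), x ∈ I ^ (j + m) → f x ∈ I ^ j

lemma goodOp_one : GoodOp I 1 0 := fun j x hx => by simpa using hx

lemma goodOp_mul {f g : Module.End k (MvPolynomial (Fin n) k)} {a b : ℕ}
    (hf : GoodOp I f a) (hg : GoodOp I g b) : GoodOp I (f * g) (a + b) := by
  intro j x hx
  rw [Module.End.mul_apply]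
  exact hf j _ (hg (j + a) x (by rwa [← add_assoc] at hx))

lemma goodOp_pderiv (i : Fin n) : GoodOp I (pderiv i).toLinearMap 1 := by
  intro j
  induction j with
  | zero => intro x _; simp [Ideal.one_eq_top]
  | succ j ih =>
    intro x hx
    rw [pow_succ] at hx
    refine Submodule.mul_induction_on hx ?_ ?_
    · intro a ha b hb
      show pderiv i (a * b) ∈ _
      rw [pderiv_mul]
      refine add_mem ?_ ?_
      · rw [pow_succ]
        exact Ideal.mul_mem_mul (ih a ha) hb
      · exact Ideal.mul_mem_right _ _ ha
    · intro a b ha hb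
      rw [map_add]
      exact add_mem ha hb

lemma goodOp_pow {f : Module.End k (MvPolynomial (Fin n) k)} (hf : GoodOp I f 1) :
    ∀ a : ℕ, GoodOp I (f ^ a) a
  | 0 => by rw [pow_zero]; exact goodOp_one I
  | (a+1) => by
      rw [pow_succ]
      exact goodOp_mul I (goodOp_pow hf a) hf

lemma goodOp_listProd : ∀ (l : List (Module.End k (MvPolynomial (Fin n) k) × ℕ)),
    (∀ q ∈ l, GoodOp I q.1 q.2) → GoodOp I (l.map Prod.fst).prod (l.map Prod.snd).sum
  | [], _ => by simpa using goodOp_one I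
  | (q :: l), h => by
      simp only [List.map_cons, List.prod_cons, List.sum_cons]
      exact goodOp_mul I (h q List.mem_cons_self)
        (goodOp_listProd l fun q hq => h q (List.mem_cons_of_mem _ hq))

lemma goodOp_pderivPow (α : Fin n →₀ ℕ) : GoodOp I (pderivPow α) (∑ i, α i) := by
  have h := goodOp_listProd I
    (List.ofFn fun i : Fin n => (((pderiv i).toLinearMap : Module.End k (MvPolynomial (Fin n) k)) ^ (α i), α i))
    (by
      intro q hq
      rw [List.mem_ofFn] at hq
      obtain ⟨i, rfl⟩ := hq
      exact goodOp_pow I (goodOp_pderiv I i) (α i))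
  simpa [pderivPow, List.map_ofFn, Function.comp_def, List.sum_ofFn] using h

lemma diffOp_mem_of_pow {p : MvPolynomial (Fin n) k} {KK : ℕ}
    (h : p.totalDegree + 1 ≤ KK) {x : MvPolynomial (Fin n) k} (hx : x ∈ I ^ KK) :
    diffOp p x ∈ I := by
  rw [diffOp, LinearMap.sum_apply]
  refine Submodule.sum_mem I fun α hα => ?_
  rw [LinearMap.smul_apply]
  refine Submodule.smul_of_tower_mem I _ ?_
  have hdeg : (∑ i, α i) ≤ KK - 1 := by
    have h1 : (α.sum fun _ m => m) ≤ p.totalDegree := le_totalDegree hα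
    have h2 : (∑ i, α i) = α.sum fun _ m => m := (Finsupp.sum_fintype α (fun _ m => m) fun _ => rfl).symm
    omega
  have hK' : KK = (KK - (∑ i, α i)) + (∑ i, α i) := by omega
  have := goodOp_pderivPow I α (KK - (∑ i, α i)) x (by rwa [← hK'])
  exact Ideal.pow_le_self (by omega) this

end good

lemma part1_lemma [Field k] {n s : ℕ} (Λ : Module.Dual k (MvPolynomial (Fin n) k))
    (ζ : Fin s → (Fin n → k)) (p : Fin s → MvPolynomial (Fin n) k)
    (hΛ : Λ = ∑ i, evalDual (ζ i) ∘ₗ diffOp (p i))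
    (K : Fin s → ℕ) (hK : ∀ i, (p i).totalDegree + 1 ≤ K i) :
    (⨅ i, (Ideal.span (Set.range fun j => X j - C (ζ i j))) ^ K i) ≤ hankelKer Λ := by
  intro x hx g
  rw [hΛ, LinearMap.sum_apply]
  refine Finset.sum_eq_zero fun i _ => ?_
  rw [LinearMap.comp_apply]
  have hxK : x ∈ (Ideal.span (Set.range fun j => X j - C (ζ i j))) ^ K i :=
    (Submodule.mem_iInf _).1 hx i
  have hxg := Ideal.mul_mem_right g _ hxK
  have hmem := diffOp_mem_of_pow _ (hK i) hxg
  have hker : Ideal.span (Set.range fun j => X j - C (ζ i j)) ≤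
      RingHom.ker (aeval (ζ i) : MvPolynomial (Fin n) k →ₐ[k] k) := by
    rw [Ideal.span_le]
    rintro _ ⟨j, rfl⟩
    simp [RingHom.mem_ker]
  have h0 := hker hmem
  rw [RingHom.mem_ker] at h0
  simpa only [evalDual, AlgHom.toLinearMap_apply] using h0

lemma apolar_monomial_right [Field k] {n : ℕ} (d : ℕ) (f : MvPolynomial (Fin n) k)
    (α : Fin n →₀ ℕ) : apolar d f (monomial α 1) = f.coeff α / mBin d α := by
  rw [apolar]
  rw [Finset.sum_eq_single α (fun b _ hb => by
      rw [coeff_monomial, if_neg (fun h => hb h.symm)]; ring)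
    (fun hα => by rw [notMem_support_iff.1 hα]; ring)]
  rw [coeff_monomial, if_pos rfl, mul_one]

lemma apolar_eq_sum_right [Field k] {n : ℕ} (d : ℕ) (f h : MvPolynomial (Fin n) k) :
    apolar d f h = ∑ α ∈ h.support, h.coeff α * (f.coeff α / mBin d α) := by
  have h1 : apolar d f h = ∑ α ∈ f.support ∪ h.support, f.coeff α * h.coeff α / mBin d α :=
    Finset.sum_subset Finset.subset_union_left
      (fun α _ hα => by rw [notMem_support_iff.1 hα]; ring)
  have h2 : (∑ α ∈ h.support, h.coeff α * (f.coeff α / mBin d α)) =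
      ∑ α ∈ f.support ∪ h.support, h.coeff α * (f.coeff α / mBin d α) :=
    Finset.sum_subset Finset.subset_union_right
      (fun α _ hα => by rw [notMem_support_iff.1 hα]; ring)
  rw [h1, h2]
  exact Finset.sum_congr rfl fun α _ => by ring

lemma part2_lemma [Field k] {n d : ℕ} (f : MvPolynomial (Fin n) k)
    (Λ : Module.Dual k (MvPolynomial (Fin n) k))
    (hext : ∀ α : Fin n →₀ ℕ, (α.sum fun _ m => m) ≤ d →
        Λ (monomial α 1) = apolar d f (monomial α 1)) :
    ∀ h ∈ hankelKer Λ, h.totalDegree ≤ d → apolar d f h = 0 := by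
  intro h hmem hdeg
  have hΛh : Λ h = 0 := by simpa using hmem 1
  rw [apolar_eq_sum_right]
  calc ∑ α ∈ h.support, h.coeff α * (f.coeff α / mBin d α)
      = ∑ α ∈ h.support, h.coeff α * Λ (monomial α 1) := by
        refine Finset.sum_congr rfl fun α hα => ?_
        rw [hext α (le_trans (le_totalDegree hα) hdeg), apolar_monomial_right]
    _ = Λ h := by
        conv_rhs => rw [← support_sum_monomial_coeff h]
        rw [map_sum]
        refine Finset.sum_congr rfl fun α _ => ?_
        have hm : (monomial α (coeff α h)) = (coeff α h) • (monomial α 1) := by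
          rw [smul_monomial, smul_eq_mul, mul_one]
        rw [hm, map_smul, smul_eq_mul]
    _ = 0 := hΛh

lemma dehom_monomial [CommSemiring k] {n : ℕ} (β : Fin (n+1) →₀ ℕ) (c : k) :
    dehom (monomial β c) = monomial (Finsupp.tail β) c := by
  rw [dehom, aeval_monomial, Finsupp.prod_fintype _ _ (fun i => pow_zero _),
    Fin.prod_univ_succ]
  simp only [Fin.cases_zero, Fin.cases_succ, one_pow, one_mul]
  rw [monomial_eq, Finsupp.prod_fintype _ _ (fun i => pow_zero _)]
  simp only [algebraMap_eq, Finsupp.tail_apply]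

lemma degCons {n : ℕ} (y : ℕ) (α : Fin n →₀ ℕ) :
    ((Finsupp.cons y α).sum fun _ m => m) = y + (α.sum fun _ m => m) := by
  rw [Finsupp.sum_fintype _ _ (fun _ => rfl), Finsupp.sum_fintype _ _ (fun _ => rfl),
    Fin.sum_univ_succ]
  simp [Finsupp.cons_zero, Finsupp.cons_succ]

lemma homog_deg_eq [CommSemiring k] {n : ℕ} {d : ℕ} {F : MvPolynomial (Fin n) k}
    (hF : F.IsHomogeneous d) {β : Fin n →₀ ℕ} (h : coeff β F ≠ 0) :
    (β.sum fun _ m => m) = d := by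
  have h2 := hF h
  rw [← h2]
  simp [Finsupp.weight_apply, Finsupp.sum]

def embed {n : ℕ} (d : ℕ) (α : Fin n →₀ ℕ) : Fin (n+1) →₀ ℕ :=
  Finsupp.cons (d - α.sum fun _ m => m) α

lemma tail_embed {n : ℕ} (d : ℕ) (α : Fin n →₀ ℕ) : Finsupp.tail (embed d α) = α :=
  Finsupp.tail_cons _ α

lemma embed_tail {n d : ℕ} {β : Fin (n+1) →₀ ℕ} (h : (β.sum fun _ m => m) = d) :
    embed d (Finsupp.tail β) = β := by
  have h1 : β = Finsupp.cons (β 0) (Finsupp.tail β) := (Finsupp.cons_tail β).symm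
  have h2 : (β.sum fun _ m => m) = β 0 + ((Finsupp.tail β).sum fun _ m => m) := by
    conv_lhs => rw [h1]
    exact degCons _ _
  rw [embed]
  have : d - ((Finsupp.tail β).sum fun _ m => m) = β 0 := by omega
  rw [this]
  exact (Finsupp.cons_tail β)

lemma deg_embed {n : ℕ} {d : ℕ} {α : Fin n →₀ ℕ} (h : (α.sum fun _ m => m) ≤ d) :
    ((embed d α).sum fun _ m => m) = d := by
  rw [embed, degCons]; omega

lemma dehom_coeff [CommSemiring k] {n d : ℕ} {F : MvPolynomial (Fin (n+1)) k}
    (hF : F.IsHomogeneous d) (α : Fin n →₀ ℕ) :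
    coeff α (dehom F) = coeff (embed d α) F := by
  conv_lhs => rw [show dehom F = ∑ β ∈ F.support, monomial (Finsupp.tail β) (coeff β F) by
    conv_lhs => rw [F.as_sum]
    rw [dehom, map_sum]
    exact Finset.sum_congr rfl fun β _ => dehom_monomial β _]
  rw [coeff_sum]
  simp only [coeff_monomial]
  rw [Finset.sum_eq_single (embed d α)]
  · rw [if_pos (tail_embed d α)]
  · intro b hb hne
    rw [if_neg]
    intro htail
    apply hne
    rw [← htail] at hne ⊢
    exact (embed_tail (homog_deg_eq hF (mem_support_iff.1 hb))).symm ▸ rfl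
  · intro hne
    rw [if_pos (tail_embed d α), notMem_support_iff.1 hne]

lemma totalDegree_dehom_le [CommSemiring k] {n d : ℕ} {F : MvPolynomial (Fin (n+1)) k}
    (hF : F.IsHomogeneous d) : (dehom F).totalDegree ≤ d := by
  rw [show dehom F = ∑ β ∈ F.support, monomial (Finsupp.tail β) (coeff β F) by
    conv_lhs => rw [F.as_sum]
    rw [dehom, map_sum]
    exact Finset.sum_congr rfl fun β _ => dehom_monomial β _]
  refine le_trans (totalDegree_finset_sum _ _) (Finset.sup_le fun β hβ => ?_)
  refine le_trans (totalDegree_monomial_le _ _) ?_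
  have h1 := homog_deg_eq hF (mem_support_iff.1 hβ)
  have h2 : (β.sum fun _ m => m) = β 0 + ((Finsupp.tail β).sum fun _ m => m) := by
    conv_lhs => rw [(Finsupp.cons_tail β).symm]
    exact degCons _ _
  have h3 : ((Finsupp.tail β).sum fun _ => id) = ((Finsupp.tail β).sum fun _ m => m) := rfl
  omega



lemma support_sub_single {ι : Type*} [DecidableEq ι] (γ : ι →₀ ℕ) (a : ι) :
    (γ - Finsupp.single a (γ a)).support = γ.support.erase a := by
  ext i
  rcases eq_or_ne i a with rfl | hne
  · simp [Finsupp.tsub_apply]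
  · simp [Finsupp.tsub_apply, Finsupp.single_eq_of_ne (Ne.symm hne), hne, Finsupp.mem_support_iff]

lemma coeff_prod_binom_pow [Field k] {ι : Type*} [DecidableEq ι] (ℓ : ι → k) (β : ι →₀ ℕ)
    (s : Finset ι) : ∀ (γ : ι →₀ ℕ),
    coeff γ (∏ i ∈ s, (X i + C (ℓ i)) ^ β i : MvPolynomial ι k) =
      if γ.support ⊆ s then
        (∏ i ∈ s, ((β i).choose (γ i) : k)) * ∏ i ∈ s, ℓ i ^ (β i - γ i)
      else 0 := by
  induction s using Finset.induction_on with
  | empty =>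
    intro γ
    rw [Finset.prod_empty, coeff_one]
    by_cases hγ : γ = 0
    · subst hγ; simp
    · rw [if_neg (fun h => hγ h.symm), if_neg]
      rw [Finset.subset_empty, Finsupp.support_eq_empty]
      exact hγ
  | @insert a s ha ih =>
    intro γ
    rw [Finset.prod_insert ha]
    have hexp : ((X a + C (ℓ a) : MvPolynomial ι k)) ^ β a =
        ∑ m ∈ Finset.range (β a + 1),
          monomial (Finsupp.single a m) (((β a).choose m : k) * ℓ a ^ (β a - m)) := by
      rw [add_pow]
      refine Finset.sum_congr rfl fun m hm => ?_
      rw [← C_pow, ← map_natCast (C : k →+* MvPolynomial ι k), ← C_mul_X_pow_eq_monomial,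
        map_mul]
      ring
    rw [hexp, Finset.sum_mul, coeff_sum]
    have hterm : ∀ m, coeff γ
        (monomial (Finsupp.single a m) (((β a).choose m : k) * ℓ a ^ (β a - m)) *
          ∏ i ∈ s, (X i + C (ℓ i)) ^ β i)
        = if Finsupp.single a m ≤ γ then
            (((β a).choose m : k) * ℓ a ^ (β a - m)) *
              coeff (γ - Finsupp.single a m) (∏ i ∈ s, (X i + C (ℓ i)) ^ β i)
          else 0 := fun m => coeff_monomial_mul' _ _ _ _
    simp only [hterm]
    rw [Finset.sum_eq_single (γ a)]
    · -- value at γ a equals RHS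
      rw [if_pos (Finsupp.single_le_iff.2 le_rfl), ih]
      rw [support_sub_single γ a]
      have hcond : (γ.support.erase a ⊆ s) = (γ.support ⊆ insert a s) := by
        rw [eq_iff_iff, ← Finset.subset_insert_iff]
      by_cases hc : γ.support ⊆ insert a s
      · rw [if_pos (by rw [hcond]; exact hc), if_pos hc,
          Finset.prod_insert ha, Finset.prod_insert ha]
        have hsame : ∀ i ∈ s, (γ - Finsupp.single a (γ a)) i = γ i := fun i hi => by
          have hia : a ≠ i := fun h => ha (h ▸ hi)
          rw [Finsupp.tsub_apply, Finsupp.single_eq_of_ne' hia]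
          simp
        rw [Finset.prod_congr rfl (fun i hi => by rw [hsame i hi]),
          Finset.prod_congr rfl (fun i hi => by rw [hsame i hi] : ∀ i ∈ s, ℓ i ^ (β i - (γ - Finsupp.single a (γ a)) i) = ℓ i ^ (β i - γ i))]
        ring
      · rw [if_neg (by rw [hcond]; exact hc), if_neg hc, mul_zero]
    · -- other m give zero
      intro m hm hne
      by_cases hle : Finsupp.single a m ≤ γ
      · rw [if_pos hle, ih]
        have hmlt : m < γ a := by
          have := Finsupp.single_le_iff.1 hle
          omega
        rw [if_neg, mul_zero]
        intro hsub
        have hmem : a ∈ (γ - Finsupp.single a m).support := by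
          rw [Finsupp.mem_support_iff, Finsupp.tsub_apply, Finsupp.single_eq_same]
          omega
        exact ha (hsub hmem)
      · rw [if_neg hle]
    · -- γ a not in range: choose = 0
      intro hnotin
      have hgt : β a < γ a := by
        rw [Finset.mem_range] at hnotin; omega
      rw [Nat.choose_eq_zero_of_lt hgt]
      simp

section keysec
variable [Field k] [CharZero k] {n d : ℕ}

def Gpoly (φ : Module.Dual k (MvPolynomial (Fin (n+1)) k)) (d : ℕ) :
    MvPolynomial (Fin (n+1)) k :=
  ∑ β ∈ Finset.finsuppAntidiag Finset.univ d,
    monomial β (mBin d (Finsupp.tail β) * φ (monomial β 1))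

lemma sum_univ_eq_finsupp_sum {m : ℕ} (β : Fin m →₀ ℕ) :
    (∑ i, β i) = β.sum fun _ a => a :=
  (Finsupp.sum_fintype β (fun _ a => a) fun _ => rfl).symm

lemma prod_univ_factorial {m : ℕ} (β : Fin m →₀ ℕ) :
    (∏ i, (β i).factorial) = β.prod fun _ a => a.factorial :=
  (Finsupp.prod_fintype β (fun _ a => a.factorial) fun _ => rfl).symm

lemma Gpoly_isHomogeneous (φ : Module.Dual k (MvPolynomial (Fin (n+1)) k)) :
    (Gpoly φ d).IsHomogeneous d := by
  refine IsHomogeneous.sum _ _ _ fun β hβ => isHomogeneous_monomial _ ?_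
  rw [Finset.mem_finsuppAntidiag] at hβ
  rw [Finsupp.degree, ← hβ.1]
  exact Finset.sum_subset (Finset.subset_univ β.support)
    fun i _ hi => Finsupp.notMem_support_iff.1 hi

lemma phi_monomial_eq (φ : Module.Dual k (MvPolynomial (Fin (n+1)) k))
    (w : Fin (n+1) →₀ ℕ) (c : k) : φ (monomial w c) = c * φ (monomial w 1) := by
  have hm : (monomial w c) = c • (monomial w 1 : MvPolynomial (Fin (n+1)) k) := by
    rw [smul_monomial, smul_eq_mul, mul_one]
  rw [hm, map_smul, smul_eq_mul]

lemma phi_L_pow (φ : Module.Dual k (MvPolynomial (Fin (n+1)) k)) (ℓ : Fin (n+1) → k)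
    (γ : Fin (n+1) →₀ ℕ) (e' : ℕ) :
    φ ((∑ i, C (ℓ i) * X i) ^ e' * monomial γ 1) =
    ∑ u ∈ Finset.piAntidiag Finset.univ e',
      (Nat.multinomial Finset.univ u : k) * (∏ i, ℓ i ^ u i) *
        φ (monomial (Finsupp.equivFunOnFinite.symm u + γ) 1) := by
  rw [Finset.sum_pow_eq_sum_piAntidiag, Finset.sum_mul, map_sum]
  refine Finset.sum_congr rfl fun u hu => ?_
  have h1 : (∏ i, (C (ℓ i) * X i) ^ u i : MvPolynomial (Fin (n+1)) k) =
      monomial (Finsupp.equivFunOnFinite.symm u) (∏ i, ℓ i ^ u i) := by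
    simp only [mul_pow, ← C_pow]
    rw [Finset.prod_mul_distrib, ← map_prod (C : k →+* MvPolynomial (Fin (n+1)) k)]
    have h2 : (∏ i, (X i : MvPolynomial (Fin (n+1)) k) ^ u i) =
        monomial (Finsupp.equivFunOnFinite.symm u) 1 := by
      rw [monomial_eq, C_1, one_mul,
        Finsupp.prod_fintype _ _ (fun i => pow_zero _)]
      rfl
    rw [h2, C_mul_monomial, mul_one]
  rw [h1]
  have h3 : ((Nat.multinomial Finset.univ u : MvPolynomial (Fin (n+1)) k)) =
      C ((Nat.multinomial Finset.univ u : k)) := by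
    rw [map_natCast (C : k →+* MvPolynomial (Fin (n+1)) k)]
  rw [h3, mul_assoc, monomial_mul, mul_one, C_mul_monomial, phi_monomial_eq]

lemma coeff_shift_G (φ : Module.Dual k (MvPolynomial (Fin (n+1)) k)) (ℓ : Fin (n+1) → k)
    (γ : Fin (n+1) →₀ ℕ) :
    coeff γ (aeval (fun i => X i + C (ℓ i)) (Gpoly φ d)) =
    ∑ β ∈ Finset.finsuppAntidiag Finset.univ d,
      (mBin d (Finsupp.tail β) * φ (monomial β 1)) *
        ((∏ i, ((β i).choose (γ i) : k)) * ∏ i, ℓ i ^ (β i - γ i)) := by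
  rw [Gpoly, map_sum, coeff_sum]
  refine Finset.sum_congr rfl fun β hβ => ?_
  rw [aeval_monomial, algebraMap_eq, Finsupp.prod_fintype _ _ (fun i => pow_zero _),
    coeff_C_mul, coeff_prod_binom_pow, if_pos (Finset.subset_univ _)]

lemma nat_key {m : ℕ} (β γ : Fin m →₀ ℕ) (h : ∀ i, γ i ≤ β i) :
    (∑ i, (β i - γ i)).factorial * (∏ i, (β i).choose (γ i)) * (∏ i, (γ i).factorial) =
      Nat.multinomial Finset.univ (fun i => β i - γ i) * ∏ i, (β i).factorial := by
  have hs : (∏ i, ((β i - γ i).factorial)) * Nat.multinomial Finset.univ (fun i => β i - γ i)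
      = (∑ i, (β i - γ i)).factorial := Nat.multinomial_spec _ _
  have hfac : (∏ i, (β i).factorial) =
      (∏ i, (β i).choose (γ i)) * (∏ i, (γ i).factorial) * (∏ i, ((β i - γ i).factorial)) := by
    rw [← Finset.prod_mul_distrib, ← Finset.prod_mul_distrib]
    exact Finset.prod_congr rfl fun i _ =>
      (Nat.choose_mul_factorial_mul_factorial (h i)).symm
  rw [hfac, ← hs]
  ring

lemma mBin_tail (β : Fin (n+1) →₀ ℕ) (hβ : (∑ i, β i) = d) :
    mBin d (Finsupp.tail β) = (d.factorial : k) / (∏ i, ((β i).factorial : k)) := by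
  rw [mBin]
  congr 1
  have h1 : ((Finsupp.tail β).prod fun _ m => m.factorial) = ∏ j, (Finsupp.tail β j).factorial :=
    (prod_univ_factorial _).symm
  have h2 : (∑ j, Finsupp.tail β j) = (Finsupp.tail β).sum fun _ a => a :=
    sum_univ_eq_finsupp_sum _
  have h3 : (∑ i, β i) = β 0 + ∑ j, Finsupp.tail β j := by
    rw [Fin.sum_univ_succ]
    exact congrArg _ (Finset.sum_congr rfl fun j _ => rfl)
  have h4 : d - ((Finsupp.tail β).sum fun _ a => a) = β 0 := by omega
  rw [h1, h4, Fin.prod_univ_succ]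
  push_cast
  rw [mul_comm]
  congr 1

lemma key_identity (φ : Module.Dual k (MvPolynomial (Fin (n+1)) k)) (ℓ : Fin (n+1) → k)
    (γ : Fin (n+1) →₀ ℕ) (hγd : (γ.sum fun _ m => m) ≤ d) :
    (((d - γ.sum fun _ m => m).factorial : ℕ) : k) * ((γ.prod fun _ m => m.factorial : ℕ) : k) *
      coeff γ (aeval (fun i => X i + C (ℓ i)) (Gpoly φ d)) =
    ((d.factorial : ℕ) : k) *
      φ ((∑ i, C (ℓ i) * X i) ^ (d - γ.sum fun _ m => m) * monomial γ 1) := by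
  classical
  set e' := d - (γ.sum fun _ m => m) with he'
  rw [coeff_shift_G, phi_L_pow, Finset.mul_sum, Finset.mul_sum]
  rw [← Finset.sum_filter_add_sum_filter_not (Finset.finsuppAntidiag Finset.univ d)
    (fun β => γ ≤ β)]
  have hzero : ∑ β ∈ (Finset.finsuppAntidiag Finset.univ d).filter (fun β => ¬ γ ≤ β),
      (((e'.factorial : ℕ) : k) * ((γ.prod fun _ m => m.factorial : ℕ) : k)) *
        ((mBin d (Finsupp.tail β) * φ (monomial β 1)) *
          ((∏ i, ((β i).choose (γ i) : k)) * ∏ i, ℓ i ^ (β i - γ i))) = 0 := by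
    refine Finset.sum_eq_zero fun β hβ => ?_
    rw [Finset.mem_filter] at hβ
    obtain ⟨i, hi⟩ : ∃ i, β i < γ i := by
      by_contra hc
      push_neg at hc
      exact hβ.2 (Finsupp.le_def.2 hc)
    have : (∏ i, ((β i).choose (γ i) : k)) = 0 :=
      Finset.prod_eq_zero (Finset.mem_univ i)
        (by rw [Nat.choose_eq_zero_of_lt hi, Nat.cast_zero])
    rw [this]
    ring
  rw [hzero, add_zero]
  refine Finset.sum_nbij' (i := fun β => fun i => β i - γ i)
    (j := fun u => Finsupp.equivFunOnFinite.symm u + γ) ?_ ?_ ?_ ?_ ?_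
  · -- membership forward
    intro β hβ
    rw [Finset.mem_filter, Finset.mem_finsuppAntidiag] at hβ
    obtain ⟨⟨hsum, -⟩, hle⟩ := hβ
    have hle' : ∀ i, γ i ≤ β i := Finsupp.le_def.1 hle
    rw [Finset.mem_piAntidiag]
    constructor
    · show (∑ i, (β i - γ i)) = e'
      have h1 : (∑ i, (β i - γ i)) + (∑ i, γ i) = ∑ i, β i := by
        rw [← Finset.sum_add_distrib]
        exact Finset.sum_congr rfl fun i _ => tsub_add_cancel_of_le (hle' i)
      have h2 := sum_univ_eq_finsupp_sum γ
      have h3 : Finset.univ.sum ⇑β = ∑ i, β i := rfl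
      omega
    · exact fun i _ => Finset.mem_univ i
  · -- membership backward
    intro u hu
    rw [Finset.mem_piAntidiag] at hu
    rw [Finset.mem_filter, Finset.mem_finsuppAntidiag]
    have happ : ∀ i, (Finsupp.equivFunOnFinite.symm u + γ) i = u i + γ i := fun i => by
      simp [Finsupp.add_apply]
    refine ⟨⟨?_, Finset.subset_univ _⟩, ?_⟩
    · have : Finset.univ.sum ⇑(Finsupp.equivFunOnFinite.symm u + γ) = ∑ i, (u i + γ i) :=
        Finset.sum_congr rfl fun i _ => happ i
      rw [this, Finset.sum_add_distrib]
      have h2 := sum_univ_eq_finsupp_sum γ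
      have h3 : Finset.univ.sum u = ∑ i, u i := rfl
      have h4 := hu.1
      omega
    · rw [Finsupp.le_def]
      intro i
      rw [happ i]
      omega
  · -- left inverse
    intro β hβ
    rw [Finset.mem_filter] at hβ
    have hle' : ∀ i, γ i ≤ β i := Finsupp.le_def.1 hβ.2
    ext i
    simp only [Finsupp.add_apply, Finsupp.coe_equivFunOnFinite_symm]
    exact tsub_add_cancel_of_le (hle' i)
  · -- right inverse
    intro u hu
    funext i
    simp [Finsupp.add_apply]
  · -- term equality
    intro β hβ
    rw [Finset.mem_filter, Finset.mem_finsuppAntidiag] at hβ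
    obtain ⟨⟨hsum, -⟩, hle⟩ := hβ
    have hle' : ∀ i, γ i ≤ β i := Finsupp.le_def.1 hle
    have hβd : (∑ i, β i) = d := hsum
    have hround : Finsupp.equivFunOnFinite.symm (fun i => β i - γ i) + γ = β := by
      ext i
      simp only [Finsupp.add_apply, Finsupp.coe_equivFunOnFinite_symm]
      exact tsub_add_cancel_of_le (hle' i)
    rw [hround, mBin_tail β hβd]
    have hEsum : (∑ i, (β i - γ i)) = e' := by
      have h1 : (∑ i, (β i - γ i)) + (∑ i, γ i) = ∑ i, β i := by
        rw [← Finset.sum_add_distrib]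
        exact Finset.sum_congr rfl fun i _ => tsub_add_cancel_of_le (hle' i)
      have h2 := sum_univ_eq_finsupp_sum γ
      omega
    have hnat := nat_key β γ hle'
    rw [hEsum] at hnat
    -- cast to k
    have hcast : ((e'.factorial : ℕ) : k) * ((γ.prod fun _ m => m.factorial : ℕ) : k) *
        (∏ i, ((β i).choose (γ i) : k)) =
        ((Nat.multinomial Finset.univ (fun i => β i - γ i) : ℕ) : k) *
          (∏ i, ((β i).factorial : k)) := by
      have hc := congrArg (fun t : ℕ => (t : k)) hnat
      push_cast at hc
      rw [← prod_univ_factorial γ]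
      push_cast
      linear_combination hc
    have hBne : (∏ i, ((β i).factorial : k)) ≠ 0 := by
      refine Finset.prod_ne_zero_iff.2 fun i _ => ?_
      exact_mod_cast Nat.cast_ne_zero.2 (Nat.factorial_ne_zero _)
    set B := ∏ i, ((β i).factorial : k)
    set c := φ (monomial β 1)
    set P := ∏ i, ℓ i ^ (β i - γ i)
    set Ch := ∏ i, ((β i).choose (γ i) : k)
    set M := ((Nat.multinomial Finset.univ (fun i => β i - γ i) : ℕ) : k)
    calc ((e'.factorial : ℕ) : k) * ((γ.prod fun _ m => m.factorial : ℕ) : k) *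
          (((d.factorial : k) / B) * c * (Ch * P))
        = (((e'.factorial : ℕ) : k) * ((γ.prod fun _ m => m.factorial : ℕ) : k) * Ch) *
            (((d.factorial : k) / B) * (c * P)) := by ring
      _ = (M * B) * (((d.factorial : k) / B) * (c * P)) := by rw [hcast]
      _ = (((d.factorial : k) / B) * B) * (M * (c * P)) := by ring
      _ = ((d.factorial : ℕ) : k) * (M * P * c) := by
          rw [div_mul_cancel₀ _ hBne]; ring

lemma monomial_mem_pow_span {m : ℕ} : ∀ (KK : ℕ) (γ : Fin m →₀ ℕ) (c : k),
    KK ≤ (γ.sum fun _ a => a) →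
    monomial γ c ∈ (Ideal.span (Set.range (X : Fin m → MvPolynomial (Fin m) k))) ^ KK
  | 0, γ, c, _ => by simp
  | (KK+1), γ, c, h => by
    have hγ : γ ≠ 0 := by
      intro h0
      rw [h0] at h
      simp at h
    obtain ⟨i, hi⟩ := Finsupp.support_nonempty_iff.2 hγ
    have hγi : 1 ≤ γ i := Nat.one_le_iff_ne_zero.2 (Finsupp.mem_support_iff.1 hi)
    have hsplit : Finsupp.single i 1 + (γ - Finsupp.single i 1) = γ := by
      ext j
      rcases eq_or_ne j i with rfl | hne
      · simp only [Finsupp.add_apply, Finsupp.tsub_apply, Finsupp.single_eq_same]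
        omega
      · simp [Finsupp.add_apply, Finsupp.tsub_apply, Finsupp.single_eq_of_ne' (Ne.symm hne)]
    have hsing : (∑ j, Finsupp.single i 1 j) = 1 := by
      rw [Finset.sum_eq_single i (fun j _ hj => Finsupp.single_eq_of_ne' (Ne.symm hj))
        (fun hc => absurd (Finset.mem_univ i) hc)]
      exact Finsupp.single_eq_same
    have hdeg : KK ≤ ((γ - Finsupp.single i 1).sum fun _ a => a) := by
      have h1 : (∑ j, (γ - Finsupp.single i 1 : Fin m →₀ ℕ) j) + (∑ j, Finsupp.single i 1 j)
          = ∑ j, γ j := by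
        rw [← Finset.sum_add_distrib]
        refine Finset.sum_congr rfl fun j _ => ?_
        rw [Finsupp.tsub_apply]
        rcases eq_or_ne j i with rfl | hne
        · rw [Finsupp.single_eq_same]; omega
        · rw [Finsupp.single_eq_of_ne' (Ne.symm hne)]; omega
      have h2 := sum_univ_eq_finsupp_sum γ
      have h3 := sum_univ_eq_finsupp_sum (γ - Finsupp.single i 1)
      omega
    have heq : monomial γ c =
        (X i : MvPolynomial (Fin m) k) * monomial (γ - Finsupp.single i 1) c := by
      rw [X, monomial_mul, one_mul, hsplit]
    rw [heq, pow_succ']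
    exact Ideal.mul_mem_mul (Ideal.subset_span ⟨i, rfl⟩)
      (monomial_mem_pow_span KK _ c hdeg)

lemma mem_pow_span_of_degrees {m KK : ℕ} (p : MvPolynomial (Fin m) k)
    (h : ∀ γ ∈ p.support, KK ≤ (γ.sum fun _ a => a)) :
    p ∈ (Ideal.span (Set.range (X : Fin m → MvPolynomial (Fin m) k))) ^ KK := by
  rw [p.as_sum]
  exact Submodule.sum_mem _ fun γ hγ => monomial_mem_pow_span KK γ _ (h γ hγ)

lemma unshift_shift {m : ℕ} (ℓ : Fin m → k) (G : MvPolynomial (Fin m) k) :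
    aeval (fun i => X i - C (ℓ i)) (aeval (fun i => X i + C (ℓ i)) G) = G := by
  have hcomp : (aeval (fun i => X i - C (ℓ i)) : MvPolynomial (Fin m) k →ₐ[k] _).comp
      (aeval (fun i => (X i + C (ℓ i) : MvPolynomial (Fin m) k))) = AlgHom.id k _ := by
    apply MvPolynomial.algHom_ext
    intro i
    simp [algebraMap_eq]
  calc aeval (fun i => X i - C (ℓ i)) (aeval (fun i => X i + C (ℓ i)) G)
      = ((aeval (fun i => X i - C (ℓ i)) : MvPolynomial (Fin m) k →ₐ[k] _).comp
          (aeval (fun i => (X i + C (ℓ i) : MvPolynomial (Fin m) k)))) G := rfl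
    _ = G := by rw [hcomp]; rfl

lemma coeff_Gpoly (φ : Module.Dual k (MvPolynomial (Fin (n+1)) k)) (β : Fin (n+1) →₀ ℕ) :
    coeff β (Gpoly φ d) =
      if Finset.univ.sum ⇑β = d then mBin d (Finsupp.tail β) * φ (monomial β 1) else 0 := by
  rw [Gpoly, coeff_sum]
  simp only [coeff_monomial]
  by_cases hb : Finset.univ.sum ⇑β = d
  · rw [if_pos hb, Finset.sum_eq_single_of_mem β
      (Finset.mem_finsuppAntidiag.2 ⟨hb, Finset.subset_univ _⟩)
      (fun b _ hne => by rw [if_neg hne]), if_pos rfl]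
  · rw [if_neg hb]
    refine Finset.sum_eq_zero fun b hbm => ?_
    rw [Finset.mem_finsuppAntidiag] at hbm
    rw [if_neg (fun hc => hb (by rw [← hc]; exact hbm.1))]

lemma mBin_ne_zero {m : ℕ} (d : ℕ) (α : Fin m →₀ ℕ) : (mBin d α : k) ≠ 0 := by
  refine div_ne_zero (Nat.cast_ne_zero.2 (Nat.factorial_ne_zero _)) (mul_ne_zero ?_ ?_)
  · refine Nat.cast_ne_zero.2 ?_
    refine Nat.pos_iff_ne_zero.1 (Finset.prod_pos fun i _ => Nat.factorial_pos _)
  · exact Nat.cast_ne_zero.2 (Nat.factorial_ne_zero _)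

set_option synthInstance.maxHeartbeats 1000000 in
lemma exists_dual_separating {V : Submodule k (MvPolynomial (Fin (n+1)) k)}
    {F : MvPolynomial (Fin (n+1)) k} (hF : F ∉ V) :
    ∃ φ : Module.Dual k (MvPolynomial (Fin (n+1)) k), (∀ v ∈ V, φ v = 0) ∧ φ F ≠ 0 := by
  have h0 : (Submodule.Quotient.mk F : MvPolynomial (Fin (n+1)) k ⧸ V) ≠ 0 := by
    rwa [Ne, Submodule.Quotient.mk_eq_zero]
  have h1 : ¬ ∀ ψ : Module.Dual k (MvPolynomial (Fin (n+1)) k ⧸ V),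
      ψ (Submodule.Quotient.mk F) = 0 := by
    rw [Module.forall_dual_apply_eq_zero_iff k]
    exact h0
  push_neg at h1
  obtain ⟨ψ, hψ⟩ := h1
  refine ⟨ψ ∘ₗ V.mkQ, fun v hv => ?_, hψ⟩
  have : V.mkQ v = 0 := (Submodule.Quotient.mk_eq_zero V).2 hv
  rw [LinearMap.comp_apply, this, map_zero]
lemma sum_support_embed {F : MvPolynomial (Fin (n+1)) k} (hF : F.IsHomogeneous d)
    (g : (Fin (n+1) →₀ ℕ) → k) :
    (∑ α ∈ (dehom F).support, coeff α (dehom F) * g (embed d α)) =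
      ∑ β ∈ F.support, coeff β F * g β := by
  refine Finset.sum_nbij' (i := fun α => embed d α) (j := fun β => Finsupp.tail β)
    ?_ ?_ ?_ ?_ ?_
  · intro α hα
    rw [mem_support_iff] at hα ⊢
    rwa [dehom_coeff hF α] at hα
  · intro β hβ
    rw [mem_support_iff] at hβ ⊢
    rw [dehom_coeff hF, embed_tail (homog_deg_eq hF hβ)]
    exact hβ
  · intro α _
    exact tail_embed d α
  · intro β hβ
    exact embed_tail (homog_deg_eq hF (mem_support_iff.1 hβ))
  · intro α _
    rw [dehom_coeff hF α]

lemma apolar_dehom_G {F : MvPolynomial (Fin (n+1)) k} (hF : F.IsHomogeneous d)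
    (φ : Module.Dual k (MvPolynomial (Fin (n+1)) k)) :
    apolar d (dehom F) (dehom (Gpoly φ d)) = φ F := by
  have hG := Gpoly_isHomogeneous (d := d) φ
  rw [apolar]
  have hterm : ∀ α ∈ (dehom F).support,
      coeff α (dehom F) * coeff α (dehom (Gpoly φ d)) / mBin d α
        = coeff α (dehom F) * φ (monomial (embed d α) 1) := by
    intro α hα
    have hαd : (α.sum fun _ m => m) ≤ d :=
      le_trans (le_totalDegree hα) (totalDegree_dehom_le hF)
    have hcond : Finset.univ.sum ⇑(embed d α) = d := by
      have h1 := deg_embed hαd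
      have h2 := sum_univ_eq_finsupp_sum (embed d α)
      have h3 : Finset.univ.sum ⇑(embed d α) = ∑ i, (embed d α) i := rfl
      omega
    rw [dehom_coeff hG α, coeff_Gpoly, if_pos hcond, tail_embed]
    rw [mul_comm (mBin d α) _, mul_div_assoc, mul_div_assoc, div_self (mBin_ne_zero d α),
      mul_one]
  rw [Finset.sum_congr rfl hterm, sum_support_embed hF (fun β => φ (monomial β 1))]
  conv_rhs => rw [F.as_sum, map_sum]
  exact Finset.sum_congr rfl fun β _ => (phi_monomial_eq φ β _).symm

end keysec

theorem stmt18 [Field k] [IsAlgClosed k] [CharZero k] {n d s : ℕ}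
    (F : MvPolynomial (Fin (n+1)) k) (hF : F.IsHomogeneous d)
    (Λ : Module.Dual k (MvPolynomial (Fin n) k))
    (hext : ∀ α : Fin n →₀ ℕ, (α.sum fun _ m => m) ≤ d →
        Λ (monomial α 1) = apolar d (dehom F) (monomial α 1))
    (hfin : FiniteDimensional k (MvPolynomial (Fin n) k ⧸ hankelKer Λ))
    (ζ : Fin s → (Fin n → k)) (p : Fin s → MvPolynomial (Fin n) k)
    (hζ : Function.Injective ζ)
    (hΛ : Λ = ∑ i, evalDual (ζ i) ∘ₗ diffOp (p i))
    (K : Fin s → ℕ) (hK : ∀ i, (p i).totalDegree + 1 ≤ K i) (hKd : ∀ i, K i ≤ d) :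
    ((⨅ i, (Ideal.span (Set.range fun j => X j - C (ζ i j))) ^ K i) ≤ hankelKer Λ) ∧
    (∀ h ∈ hankelKer Λ, h.totalDegree ≤ d → apolar d (dehom F) h = 0) ∧
    ∃ N : Fin s → MvPolynomial (Fin (n+1)) k,
      (∀ i, (N i).IsHomogeneous (K i - 1)) ∧
      F = ∑ i, (X 0 + ∑ j : Fin n, C (ζ i j) * X j.succ) ^ (d - K i + 1) * N i := by
  classical
  have hLam1 := part1_lemma Λ ζ p hΛ K hK
  have hLam2 := part2_lemma (dehom F) Λ hext
  refine ⟨hLam1, hLam2, ?_⟩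
  set Ls : Fin s → MvPolynomial (Fin (n+1)) k :=
    fun i => X 0 + ∑ j : Fin n, C (ζ i j) * X j.succ with hLs
  have hLhom : ∀ i, (Ls i).IsHomogeneous 1 := by
    intro i
    refine (isHomogeneous_X _ _).add (IsHomogeneous.sum _ _ _ fun j _ => ?_)
    exact (isHomogeneous_C _ _).mul (isHomogeneous_X _ _)
  set Vsub : Fin s → Submodule k (MvPolynomial (Fin (n+1)) k) :=
    fun i => Submodule.map (LinearMap.mulLeft k ((Ls i) ^ (d - K i + 1)))
      (homogeneousSubmodule (Fin (n+1)) k (K i - 1)) with hVsub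
  suffices hFV : F ∈ ⨆ i, Vsub i by
    obtain ⟨a, ha, hasum⟩ := (Submodule.mem_iSup_iff_exists_finsupp Vsub F).1 hFV
    have hchoice : ∀ i : Fin s, ∃ N, N ∈ homogeneousSubmodule (Fin (n+1)) k (K i - 1) ∧
        (Ls i) ^ (d - K i + 1) * N = a i := by
      intro i
      obtain ⟨N, hN, hNe⟩ := Submodule.mem_map.1 (ha i)
      exact ⟨N, hN, by simpa [LinearMap.mulLeft_apply] using hNe⟩
    choose N hN1 hN2 using hchoice
    refine ⟨N, fun i => (mem_homogeneousSubmodule _ _).1 (hN1 i), ?_⟩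
    rw [← hasum, Finsupp.sum_fintype _ _ (fun _ => rfl)]
    exact Finset.sum_congr rfl fun i _ => (hN2 i).symm
  by_contra hFV
  obtain ⟨φ, hφ0, hφF⟩ := exists_dual_separating hFV
  set G := Gpoly (n := n) φ d with hGdef
  have hG : G.IsHomogeneous d := Gpoly_isHomogeneous φ
  refine hφF ?_
  rw [← apolar_dehom_G hF φ]
  refine hLam2 _ (hLam1 ?_) (totalDegree_dehom_le hG)
  rw [Submodule.mem_iInf]
  intro i
  set ℓ : Fin (n+1) → k := fun t => Fin.cases 1 (ζ i) t with hℓ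
  have hLeq : (∑ t, C (ℓ t) * X t) = Ls i := by
    rw [Fin.sum_univ_succ]
    simp only [hℓ, Fin.cases_zero, Fin.cases_succ, map_one, one_mul]
    rfl
  have hKi1 : 1 ≤ K i := le_trans (by omega) (hK i)
  -- step 1: coefficients of the shifted polynomial vanish in low degrees
  have hcv : ∀ γ : Fin (n+1) →₀ ℕ, (γ.sum fun _ m => m) ≤ K i - 1 →
      coeff γ (aeval (fun t => X t + C (ℓ t)) G) = 0 := by
    intro γ hγ
    have hγd : (γ.sum fun _ m => m) ≤ d := by have := hKd i; omega
    have hkey := key_identity φ ℓ γ hγd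
    have hmem : (∑ t, C (ℓ t) * X t) ^ (d - (γ.sum fun _ m => m)) * monomial γ 1 ∈ Vsub i := by
      rw [hLeq]
      have hsplit : d - (γ.sum fun _ m => m) =
          (d - K i + 1) + ((d - (γ.sum fun _ m => m)) - (d - K i + 1)) := by
        have := hKd i; omega
      rw [hsplit, pow_add, mul_assoc]
      refine Submodule.mem_map_of_mem ?_
      rw [mem_homogeneousSubmodule]
      have hhom := ((hLhom i).pow ((d - (γ.sum fun _ m => m)) - (d - K i + 1))).mul
        (isHomogeneous_monomial (1 : k) (show Finsupp.degree γ = (γ.sum fun _ m => m) from rfl))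
      have harith : 1 * ((d - (γ.sum fun _ m => m)) - (d - K i + 1)) + (γ.sum fun _ m => m)
          = K i - 1 := by
        have := hKd i; omega
      rwa [harith] at hhom
    have hv0 : φ ((∑ t, C (ℓ t) * X t) ^ (d - (γ.sum fun _ m => m)) * monomial γ 1) = 0 :=
      hφ0 _ ((le_iSup Vsub i) hmem)
    rw [hv0, mul_zero] at hkey
    have hA : (((d - (γ.sum fun _ m => m)).factorial : ℕ) : k) ≠ 0 :=
      Nat.cast_ne_zero.2 (Nat.factorial_ne_zero _)
    have hB : ((γ.prod fun _ m => m.factorial : ℕ) : k) ≠ 0 := by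
      refine Nat.cast_ne_zero.2 (Nat.pos_iff_ne_zero.1 ?_)
      refine Finset.prod_pos fun j _ => Nat.factorial_pos _
    rcases mul_eq_zero.1 hkey with hc | hc
    · exact absurd hc (mul_ne_zero hA hB)
    · exact hc
  -- step 2: the shifted polynomial lies in the K i-th power of the irrelevant ideal
  have hshift : (aeval (fun t => X t + C (ℓ t)) G) ∈
      (Ideal.span (Set.range (X : Fin (n+1) → MvPolynomial (Fin (n+1)) k))) ^ (K i) := by
    refine mem_pow_span_of_degrees _ fun γ hγ => ?_
    by_contra hlt
    push_neg at hlt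
    exact (mem_support_iff.1 hγ) (hcv γ (by omega))
  -- step 3: pull back along the inverse translation
  have hGmem : G ∈ (Ideal.span (Set.range fun t =>
      (X t - C (ℓ t) : MvPolynomial (Fin (n+1)) k))) ^ (K i) := by
    have hGeq : G = aeval (fun t => X t - C (ℓ t)) (aeval (fun t => X t + C (ℓ t)) G) :=
      (unshift_shift ℓ G).symm
    have hmap := Ideal.mem_map_of_mem
      (aeval (fun t => X t - C (ℓ t)) :
        MvPolynomial (Fin (n+1)) k →ₐ[k] MvPolynomial (Fin (n+1)) k) hshift
    have h2 : Ideal.map (aeval (fun t => X t - C (ℓ t)) :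
          MvPolynomial (Fin (n+1)) k →ₐ[k] MvPolynomial (Fin (n+1)) k)
        ((Ideal.span (Set.range (X : Fin (n+1) → MvPolynomial (Fin (n+1)) k))) ^ (K i)) ≤
        (Ideal.span (Set.range fun t =>
          (X t - C (ℓ t) : MvPolynomial (Fin (n+1)) k))) ^ (K i) := by
      rw [Ideal.map_pow]
      refine Ideal.pow_right_mono ?_ _
      rw [Ideal.map_span, Ideal.span_le]
      rintro _ ⟨_, ⟨t, rfl⟩, rfl⟩
      simp only [aeval_X]
      exact Ideal.subset_span ⟨t, rfl⟩
    rw [hGeq]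
    exact h2 hmap
  -- step 4: dehomogenize
  have hmap := Ideal.mem_map_of_mem
    (aeval (fun t : Fin (n+1) => (Fin.cases 1 X t : MvPolynomial (Fin n) k)) :
      MvPolynomial (Fin (n+1)) k →ₐ[k] MvPolynomial (Fin n) k) hGmem
  have h2 : Ideal.map (aeval (fun t : Fin (n+1) => (Fin.cases 1 X t : MvPolynomial (Fin n) k)) :
        MvPolynomial (Fin (n+1)) k →ₐ[k] MvPolynomial (Fin n) k)
      ((Ideal.span (Set.range fun t =>
        (X t - C (ℓ t) : MvPolynomial (Fin (n+1)) k))) ^ (K i)) ≤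
      (Ideal.span (Set.range fun j =>
        (X j - C (ζ i j) : MvPolynomial (Fin n) k))) ^ (K i) := by
    rw [Ideal.map_pow]
    refine Ideal.pow_right_mono ?_ _
    rw [Ideal.map_span, Ideal.span_le]
    rintro _ ⟨_, ⟨t, rfl⟩, rfl⟩
    induction t using Fin.cases with
    | zero =>
      simp only [map_sub, aeval_X, aeval_C, hℓ, Fin.cases_zero, algebraMap_eq, map_one,
        sub_self]
      exact Ideal.zero_mem _
    | succ j =>
      simp only [map_sub, aeval_X, aeval_C, hℓ, Fin.cases_succ, algebraMap_eq]
      exact Ideal.subset_span ⟨j, rfl⟩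
  exact h2 hmap

end
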